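/- Let X_i,...,X_j be random variables with joint distribution p(x_i,...,x_j) = (1/d) Π_{k=i+1}^{j} |U^{(k)}_{x_{k-1}x_k}|^2 for unitaries U^{(k)}, and consider the 'non-Markovian' quantum entropies defined by S(A_i...A_j) = 1 − (1/d) Σ_{x_i,x_j} p^{(ij)}_{x_ix_j} log_d p^{(ij)}_{x_ix_j}, with p^{(ij)}_{x_ix_j} = Σ_{x_{i+1},...,x_{j-1}} Π_{k=i+1}^{j} |U^{(k)}_{x_{k-1}x_k}|^2. Then S(A_j|A_{j-1}) − S(A_j|A_{j-1}...A_i) ≤ 1, where S(A_j|A_{j-1}...A_i) = S(A_i...A_j) − S(A_i...A_{j-1}). -/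

import Mathlib

open Matrix BigOperators

/-- The doubly stochastic transition matrix of the k-th measurement: |U⁽ᵏ⁾_{ab}|². -/
noncomputable def transMat {d : ℕ} (U : ℕ → Matrix (Fin d) (Fin d) ℂ) (k : ℕ) :
    Matrix (Fin d) (Fin d) ℝ :=
  Matrix.of fun a b => ‖U k a b‖ ^ 2

/-- p⁽ⁱʲ⁾_{x_i x_j} = Σ_{x_{i+1},…,x_{j-1}} Π_{k=i+1}^{j} |U⁽ᵏ⁾_{x_{k-1}x_k}|²,
as the (x_i, x_j) entry of the ordered product of transition matrices. -/
noncomputable def pathMat {d : ℕ} (U : ℕ → Matrix (Fin d) (Fin d) ℂ) (i j : ℕ) :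
    Matrix (Fin d) (Fin d) ℝ :=
  (((List.range (j - i)).map fun t => transMat U (i + 1 + t)).prod)

/-- 'Non-Markovian' joint entropy of the unamplified chain A_i…A_j (in dits, base-d
logarithms): S(A_i…A_j) = 1 − (1/d) Σ_{x_i,x_j} p⁽ⁱʲ⁾ log_d p⁽ⁱʲ⁾. -/
noncomputable def chainS (d : ℕ) (U : ℕ → Matrix (Fin d) (Fin d) ℂ) (i j : ℕ) : ℝ :=
  1 - (1 / d) * ∑ a, ∑ b,
    pathMat U i j a b * (Real.log (pathMat U i j a b) / Real.log d)

/-- Doubly stochastic predicate. -/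
def IsDS {d : ℕ} (M : Matrix (Fin d) (Fin d) ℝ) : Prop :=
  (∀ a b, 0 ≤ M a b) ∧ (∀ a, ∑ b, M a b = 1) ∧ (∀ b, ∑ a, M a b = 1)

lemma isDS_one {d : ℕ} (hd : 0 < d) : IsDS (1 : Matrix (Fin d) (Fin d) ℝ) := by
  refine ⟨fun a b => ?_, fun a => ?_, fun b => ?_⟩
  · rw [Matrix.one_apply]; split <;> norm_num
  · simp [Matrix.one_apply]
  · simp [Matrix.one_apply]

lemma isDS_mul {d : ℕ} {M N : Matrix (Fin d) (Fin d) ℝ} (hM : IsDS M) (hN : IsDS N) :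
    IsDS (M * N) := by
  obtain ⟨hM0, hMr, hMc⟩ := hM
  obtain ⟨hN0, hNr, hNc⟩ := hN
  refine ⟨fun a b => ?_, fun a => ?_, fun b => ?_⟩
  · rw [Matrix.mul_apply]
    exact Finset.sum_nonneg fun c _ => mul_nonneg (hM0 a c) (hN0 c b)
  · simp only [Matrix.mul_apply]
    rw [Finset.sum_comm]
    calc ∑ c, ∑ b, M a c * N c b = ∑ c, M a c * ∑ b, N c b := by
          simp [Finset.mul_sum]
      _ = 1 := by simp only [hNr, mul_one]; exact hMr a
  · simp only [Matrix.mul_apply]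
    calc ∑ a, ∑ c, M a c * N c b = ∑ c, (∑ a, M a c) * N c b := by
          rw [Finset.sum_comm]; simp [Finset.sum_mul]
      _ = 1 := by simp only [hMc, one_mul]; exact hNc b

lemma isDS_transMat {d : ℕ} {U : ℕ → Matrix (Fin d) (Fin d) ℂ}
    (hU : ∀ k, U k ∈ Matrix.unitaryGroup (Fin d) ℂ) (k : ℕ) : IsDS (transMat U k) := by
  refine ⟨fun a b => ?_, fun a => ?_, fun b => ?_⟩
  · show (0:ℝ) ≤ ‖U k a b‖ ^ 2
    positivity
  · have h1 : U k * star (U k) = 1 := Matrix.mem_unitaryGroup_iff.mp (hU k)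
    have := congrArg (fun M => (M a a).re) h1
    simp only [Matrix.mul_apply, Matrix.star_apply, Matrix.one_apply_eq, Complex.one_re,
      Complex.re_sum] at this
    rw [← this]
    refine Finset.sum_congr rfl fun b _ => ?_
    simp [transMat, Complex.mul_conj, Complex.sq_norm, Complex.normSq_apply]
  · have h1 : star (U k) * U k = 1 := Matrix.mem_unitaryGroup_iff'.mp (hU k)
    have := congrArg (fun M => (M b b).re) h1
    simp only [Matrix.mul_apply, Matrix.star_apply, Matrix.one_apply_eq, Complex.one_re,
      Complex.re_sum] at this
    rw [← this]
    refine Finset.sum_congr rfl fun a _ => ?_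
    simp [transMat, Complex.mul_conj, Complex.sq_norm, Complex.normSq_apply]

lemma isDS_list_prod {d : ℕ} (hd : 0 < d) (L : List (Matrix (Fin d) (Fin d) ℝ))
    (h : ∀ M ∈ L, IsDS M) : IsDS L.prod := by
  induction L with
  | nil => simpa using isDS_one hd
  | cons M L ih =>
    rw [List.prod_cons]
    exact isDS_mul (h M (by simp)) (ih fun N hN => h N (by simp [hN]))

lemma isDS_pathMat {d : ℕ} (hd : 0 < d) {U : ℕ → Matrix (Fin d) (Fin d) ℂ}
    (hU : ∀ k, U k ∈ Matrix.unitaryGroup (Fin d) ℂ) (i j : ℕ) : IsDS (pathMat U i j) := by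
  apply isDS_list_prod hd
  intro M hM
  simp only [List.mem_map, List.mem_range] at hM
  obtain ⟨t, _, rfl⟩ := hM
  exact isDS_transMat hU _

lemma pathMat_succ {d : ℕ} (U : ℕ → Matrix (Fin d) (Fin d) ℂ) {i j : ℕ} (hij : i < j) :
    pathMat U i j = pathMat U i (j - 1) * transMat U j := by
  unfold pathMat
  have h1 : j - i = (j - 1 - i) + 1 := by omega
  have h2 : i + 1 + (j - 1 - i) = j := by omega
  rw [h1, List.range_succ, List.map_append, List.prod_append]
  simp [h2]

/-- Entropy of a distribution on `Fin d` is at most `log d`. -/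
lemma sum_negMulLog_le {d : ℕ} (hd : 0 < d) (q : Fin d → ℝ) (h0 : ∀ b, 0 ≤ q b)
    (h1 : ∑ b, q b = 1) : ∑ b, Real.negMulLog (q b) ≤ Real.log d := by
  have hd0 : (d : ℝ) ≠ 0 := Nat.cast_ne_zero.mpr hd.ne'
  have key := Real.concaveOn_negMulLog.le_map_sum (t := Finset.univ)
    (w := fun _ : Fin d => 1 / (d : ℝ)) (p := q)
    (fun i _ => by positivity)
    (by simp [Finset.card_univ]; field_simp)
    (fun i _ => h0 i)
  simp only [smul_eq_mul, ← Finset.mul_sum, h1, mul_one] at key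
  have hval : Real.negMulLog (1 / (d : ℝ)) = (1 / d) * Real.log d := by
    rw [Real.negMulLog, one_div, Real.log_inv]; ring
  rw [hval] at key
  exact (mul_le_mul_iff_right₀ (show (0:ℝ) < 1 / d by positivity)).mp key

/-- Entropy does not decrease under a doubly stochastic map. -/
lemma sum_negMulLog_mono {d : ℕ} (p : Fin d → ℝ) (T : Matrix (Fin d) (Fin d) ℝ)
    (hT : IsDS T) (hp : ∀ c, 0 ≤ p c) :
    ∑ c, Real.negMulLog (p c) ≤ ∑ b, Real.negMulLog (∑ c, p c * T c b) := by
  obtain ⟨hT0, hTr, hTc⟩ := hT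
  have step : ∀ b, ∑ c, T c b * Real.negMulLog (p c) ≤ Real.negMulLog (∑ c, p c * T c b) := by
    intro b
    have key := Real.concaveOn_negMulLog.le_map_sum (t := Finset.univ)
      (w := fun c : Fin d => T c b) (p := p)
      (fun c _ => hT0 c b) (hTc b) (fun c _ => hp c)
    simp only [smul_eq_mul] at key
    calc ∑ c, T c b * Real.negMulLog (p c) ≤ Real.negMulLog (∑ c, T c b * p c) := key
      _ = Real.negMulLog (∑ c, p c * T c b) := by
          congr 1; exact Finset.sum_congr rfl fun c _ => mul_comm _ _
  calc ∑ c, Real.negMulLog (p c)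
      = ∑ c, (∑ b, T c b) * Real.negMulLog (p c) := by simp [hTr]
    _ = ∑ b, ∑ c, T c b * Real.negMulLog (p c) := by
        rw [Finset.sum_comm]; simp [Finset.sum_mul]
    _ ≤ ∑ b, Real.negMulLog (∑ c, p c * T c b) := Finset.sum_le_sum fun b _ => step b

theorem unamplified_chain_nonmarkov_bound {d : ℕ} (hd : 0 < d)
    (U : ℕ → Matrix (Fin d) (Fin d) ℂ)
    (hU : ∀ k, U k ∈ Matrix.unitaryGroup (Fin d) ℂ)
    (i j : ℕ) (hij : i < j) :
    (chainS d U (j - 1) j - 1) - (chainS d U i j - chainS d U i (j - 1)) ≤ 1 := by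
  rcases eq_or_lt_of_le (Nat.one_le_iff_ne_zero.mpr hd.ne') with h1 | h2
  · -- d = 1
    have hd1 : d = 1 := h1.symm
    subst hd1
    have : ∀ i' j', chainS 1 U i' j' = 1 := by
      intro i' j'
      simp [chainS]
    simp [this]
  · -- d ≥ 2
    have hL : 0 < Real.log d := Real.log_pos (by exact_mod_cast h2)
    have hd0 : (0:ℝ) < (d : ℝ) := by exact_mod_cast hd
    set E : ℕ → ℕ → ℝ := fun i' j' => ∑ a, ∑ b, Real.negMulLog (pathMat U i' j' a b) with hE
    have hchain : ∀ i' j', chainS d U i' j' = 1 + E i' j' / ((d : ℝ) * Real.log d) := by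
      intro i' j'
      unfold chainS
      rw [hE]
      simp only [Real.negMulLog, neg_mul, Finset.sum_neg_distrib, ← mul_div_assoc,
        ← Finset.sum_div]
      field_simp
      ring
    -- bounds
    have hlast : E (j-1) j ≤ (d : ℝ) * Real.log d := by
      rw [hE]
      calc ∑ a, ∑ b, Real.negMulLog (pathMat U (j-1) j a b)
          ≤ ∑ _a : Fin d, Real.log d := by
            apply Finset.sum_le_sum
            intro a _
            exact sum_negMulLog_le hd _ (fun b => (isDS_pathMat hd hU (j-1) j).1 a b)
              ((isDS_pathMat hd hU (j-1) j).2.1 a)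
        _ = (d : ℝ) * Real.log d := by simp [Finset.card_univ, mul_comm]
    have hmono : E i (j-1) ≤ E i j := by
      rw [hE]
      have hsplit := pathMat_succ U hij
      apply Finset.sum_le_sum
      intro a _
      have := sum_negMulLog_mono (fun c => pathMat U i (j-1) a c) (transMat U j)
        (isDS_transMat hU j) (fun c => (isDS_pathMat hd hU i (j-1)).1 a c)
      calc ∑ b, Real.negMulLog (pathMat U i (j-1) a b)
          ≤ ∑ b, Real.negMulLog (∑ c, pathMat U i (j-1) a c * transMat U j c b) := this
        _ = ∑ b, Real.negMulLog (pathMat U i j a b) := by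
            refine Finset.sum_congr rfl fun b _ => ?_
            rw [hsplit, Matrix.mul_apply]
    rw [hchain, hchain, hchain]
    have hDL : 0 < (d : ℝ) * Real.log d := by positivity
    have : (E (j-1) j - E i j + E i (j-1)) / ((d : ℝ) * Real.log d) ≤ 1 := by
      rw [div_le_one hDL]
      nlinarith
    calc (1 + E (j-1) j / ((d:ℝ) * Real.log d) - 1) -
          (1 + E i j / ((d:ℝ) * Real.log d) - (1 + E i (j-1) / ((d:ℝ) * Real.log d)))
        = (E (j-1) j - E i j + E i (j-1)) / ((d : ℝ) * Real.log d) := by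
          field_simp
          ring
      _ ≤ 1 := this
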